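/- Let f : U → X be a G-equivariant open immersion of k-schemes. Then the induced morphism Fix_G(f) : Fix_G(U) → Fix_G(X) is an open immersion. -/

import Mathlib

open CategoryTheory CategoryTheory.Limits AlgebraicGeometry

noncomputable section
namespace Paper
universe u
variable (k : CommRingCat.{u})
variable {G X U : Scheme.{u}}

/-- The morphism `(m, pr₂) : G ×ₖ X ⟶ X ×ₖ X`. -/
def actionPair (sG : G ⟶ Spec k) (sX : X ⟶ Spec k) (m : pullback sG sX ⟶ X)
    (hm : m ≫ sX = pullback.snd sG sX ≫ sX) : pullback sG sX ⟶ pullback sX sX :=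
  pullback.lift m (pullback.snd sG sX) hm

/-- The fixed-point scheme `Fix_G(X)`. -/
def Fix (sG : G ⟶ Spec k) (sX : X ⟶ Spec k) (m : pullback sG sX ⟶ X)
    (hm : m ≫ sX = pullback.snd sG sX ≫ sX) : Scheme :=
  pullback (actionPair k sG sX m hm) (pullback.diagonal sX)

/-- The canonical projection `Fix_G(X) ⟶ G ×ₖ X`. -/
def fixToProd (sG : G ⟶ Spec k) (sX : X ⟶ Spec k) (m : pullback sG sX ⟶ X)
    (hm : m ≫ sX = pullback.snd sG sX ≫ sX) :
    Fix k sG sX m hm ⟶ pullback sG sX :=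
  pullback.fst (actionPair k sG sX m hm) (pullback.diagonal sX)

/-- The canonical projection `Fix_G(X) ⟶ X`. -/
def fixToBase (sG : G ⟶ Spec k) (sX : X ⟶ Spec k) (m : pullback sG sX ⟶ X)
    (hm : m ≫ sX = pullback.snd sG sX ≫ sX) :
    Fix k sG sX m hm ⟶ X :=
  pullback.snd (actionPair k sG sX m hm) (pullback.diagonal sX)

/-- `id_G ×ₖ f : G ×ₖ U ⟶ G ×ₖ X`. -/
def prodMap (sG : G ⟶ Spec k) (sU : U ⟶ Spec k) (sX : X ⟶ Spec k)
    (f : U ⟶ X) (hf : f ≫ sX = sU) : pullback sG sU ⟶ pullback sG sX :=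
  pullback.map sG sU sG sX (𝟙 G) f (𝟙 (Spec k)) (by simp) (by simp [hf])

theorem fixMap_w (sG : G ⟶ Spec k) (sU : U ⟶ Spec k) (sX : X ⟶ Spec k)
    (mU : pullback sG sU ⟶ U) (hmU : mU ≫ sU = pullback.snd sG sU ≫ sU)
    (mX : pullback sG sX ⟶ X) (hmX : mX ≫ sX = pullback.snd sG sX ≫ sX)
    (f : U ⟶ X) (hf : f ≫ sX = sU)
    (heq : prodMap k sG sU sX f hf ≫ mX = mU ≫ f) :
    (fixToProd k sG sU mU hmU ≫ prodMap k sG sU sX f hf) ≫ actionPair k sG sX mX hmX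
      = (fixToBase k sG sU mU hmU ≫ f) ≫ pullback.diagonal sX := by
  have h1 : fixToProd k sG sU mU hmU ≫ mU = fixToBase k sG sU mU hmU := by
    have hc : fixToProd k sG sU mU hmU ≫ actionPair k sG sU mU hmU
        = fixToBase k sG sU mU hmU ≫ pullback.diagonal sU := pullback.condition
    have := congrArg (· ≫ pullback.fst sU sU) hc
    simp only [actionPair, Category.assoc] at this
    rw [pullback.lift_fst, pullback.diagonal_fst, Category.comp_id] at this
    exact this
  have h2 : fixToProd k sG sU mU hmU ≫ pullback.snd sG sU = fixToBase k sG sU mU hmU := by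
    have hc : fixToProd k sG sU mU hmU ≫ actionPair k sG sU mU hmU
        = fixToBase k sG sU mU hmU ≫ pullback.diagonal sU := pullback.condition
    have := congrArg (· ≫ pullback.snd sU sU) hc
    simp only [actionPair, Category.assoc] at this
    rw [pullback.lift_snd, pullback.diagonal_snd, Category.comp_id] at this
    exact this
  apply pullback.hom_ext
  · simp only [Category.assoc, actionPair, pullback.lift_fst, pullback.diagonal_fst,
      Category.comp_id]
    rw [heq, ← Category.assoc, h1]
  · simp only [Category.assoc, actionPair, pullback.lift_snd, pullback.diagonal_snd,
      Category.comp_id]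
    rw [show prodMap k sG sU sX f hf ≫ pullback.snd sG sX = pullback.snd sG sU ≫ f from by
      exact pullback.lift_snd _ _ _]
    rw [← Category.assoc, h2]

/-- The induced morphism `Fix_G(f) : Fix_G(U) ⟶ Fix_G(X)`. -/
def fixMap (sG : G ⟶ Spec k) (sU : U ⟶ Spec k) (sX : X ⟶ Spec k)
    (mU : pullback sG sU ⟶ U) (hmU : mU ≫ sU = pullback.snd sG sU ≫ sU)
    (mX : pullback sG sX ⟶ X) (hmX : mX ≫ sX = pullback.snd sG sX ≫ sX)
    (f : U ⟶ X) (hf : f ≫ sX = sU)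
    (heq : prodMap k sG sU sX f hf ≫ mX = mU ≫ f) :
    Fix k sG sU mU hmU ⟶ Fix k sG sX mX hmX :=
  pullback.lift (fixToProd k sG sU mU hmU ≫ prodMap k sG sU sX f hf)
    (fixToBase k sG sU mU hmU ≫ f)
    (fixMap_w k sG sU sX mU hmU mX hmX f hf heq)



lemma fixToProd_comp_m (sG : G ⟶ Spec k) (sX : X ⟶ Spec k) (m : pullback sG sX ⟶ X)
    (hm : m ≫ sX = pullback.snd sG sX ≫ sX) :
    fixToProd k sG sX m hm ≫ m = fixToBase k sG sX m hm := by
  have hc : fixToProd k sG sX m hm ≫ actionPair k sG sX m hm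
      = fixToBase k sG sX m hm ≫ pullback.diagonal sX := pullback.condition
  have := congrArg (· ≫ pullback.fst sX sX) hc
  simp only [actionPair, Category.assoc] at this
  rw [pullback.lift_fst, pullback.diagonal_fst, Category.comp_id] at this
  exact this

lemma fixToProd_comp_snd (sG : G ⟶ Spec k) (sX : X ⟶ Spec k) (m : pullback sG sX ⟶ X)
    (hm : m ≫ sX = pullback.snd sG sX ≫ sX) :
    fixToProd k sG sX m hm ≫ pullback.snd sG sX = fixToBase k sG sX m hm := by
  have hc : fixToProd k sG sX m hm ≫ actionPair k sG sX m hm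
      = fixToBase k sG sX m hm ≫ pullback.diagonal sX := pullback.condition
  have := congrArg (· ≫ pullback.snd sX sX) hc
  simp only [actionPair, Category.assoc] at this
  rw [pullback.lift_snd, pullback.diagonal_snd, Category.comp_id] at this
  exact this

lemma w1 (sG : G ⟶ Spec k) (sU : U ⟶ Spec k) (sX : X ⟶ Spec k)
    (mU : pullback sG sU ⟶ U) (hmU : mU ≫ sU = pullback.snd sG sU ≫ sU)
    (mX : pullback sG sX ⟶ X) (hmX : mX ≫ sX = pullback.snd sG sX ≫ sX)
    (f : U ⟶ X) (hf : f ≫ sX = sU)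
    (heq : prodMap k sG sU sX f hf ≫ mX = mU ≫ f) [Mono f]
    {T : Scheme.{u}} (a : T ⟶ Fix k sG sX mX hmX) (b : T ⟶ U)
    (hab : b ≫ f = a ≫ fixToBase k sG sX mX hmX) :
    (a ≫ fixToProd k sG sX mX hmX ≫ pullback.fst sG sX) ≫ sG = b ≫ sU := by
  have hc : pullback.fst sG sX ≫ sG = pullback.snd sG sX ≫ sX := pullback.condition
  rw [Category.assoc, Category.assoc, hc, reassoc_of% fixToProd_comp_snd k sG sX mX hmX,
    ← Category.assoc, ← hab, Category.assoc, hf]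

/-- The component `T ⟶ G ×ₖ U` of the lift. -/
def gmap (sG : G ⟶ Spec k) (sU : U ⟶ Spec k) (sX : X ⟶ Spec k)
    (mU : pullback sG sU ⟶ U) (hmU : mU ≫ sU = pullback.snd sG sU ≫ sU)
    (mX : pullback sG sX ⟶ X) (hmX : mX ≫ sX = pullback.snd sG sX ≫ sX)
    (f : U ⟶ X) (hf : f ≫ sX = sU)
    (heq : prodMap k sG sU sX f hf ≫ mX = mU ≫ f) [Mono f]
    {T : Scheme.{u}} (a : T ⟶ Fix k sG sX mX hmX) (b : T ⟶ U)
    (hab : b ≫ f = a ≫ fixToBase k sG sX mX hmX) : T ⟶ pullback sG sU :=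
  pullback.lift (a ≫ fixToProd k sG sX mX hmX ≫ pullback.fst sG sX) b
    (w1 k sG sU sX mU hmU mX hmX f hf heq a b hab)

lemma gmap_prodMap (sG : G ⟶ Spec k) (sU : U ⟶ Spec k) (sX : X ⟶ Spec k)
    (mU : pullback sG sU ⟶ U) (hmU : mU ≫ sU = pullback.snd sG sU ≫ sU)
    (mX : pullback sG sX ⟶ X) (hmX : mX ≫ sX = pullback.snd sG sX ≫ sX)
    (f : U ⟶ X) (hf : f ≫ sX = sU)
    (heq : prodMap k sG sU sX f hf ≫ mX = mU ≫ f) [Mono f]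
    {T : Scheme.{u}} (a : T ⟶ Fix k sG sX mX hmX) (b : T ⟶ U)
    (hab : b ≫ f = a ≫ fixToBase k sG sX mX hmX) :
    gmap k sG sU sX mU hmU mX hmX f hf heq a b hab ≫ prodMap k sG sU sX f hf
      = a ≫ fixToProd k sG sX mX hmX := by
  apply pullback.hom_ext
  · simp only [Category.assoc]
    rw [show prodMap k sG sU sX f hf ≫ pullback.fst sG sX = pullback.fst sG sU ≫ 𝟙 G from
      pullback.lift_fst _ _ _, Category.comp_id, gmap, pullback.lift_fst]
  · have h2 : prodMap k sG sU sX f hf ≫ pullback.snd sG sX = pullback.snd sG sU ≫ f := by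
      exact pullback.lift_snd _ _ _
    rw [Category.assoc, h2, ← Category.assoc, gmap, pullback.lift_snd, hab, Category.assoc,
      fixToProd_comp_snd]

lemma gmap_mU (sG : G ⟶ Spec k) (sU : U ⟶ Spec k) (sX : X ⟶ Spec k)
    (mU : pullback sG sU ⟶ U) (hmU : mU ≫ sU = pullback.snd sG sU ≫ sU)
    (mX : pullback sG sX ⟶ X) (hmX : mX ≫ sX = pullback.snd sG sX ≫ sX)
    (f : U ⟶ X) (hf : f ≫ sX = sU)
    (heq : prodMap k sG sU sX f hf ≫ mX = mU ≫ f) [Mono f]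
    {T : Scheme.{u}} (a : T ⟶ Fix k sG sX mX hmX) (b : T ⟶ U)
    (hab : b ≫ f = a ≫ fixToBase k sG sX mX hmX) : gmap k sG sU sX mU hmU mX hmX f hf heq a b hab ≫ mU = b := by
  apply (cancel_mono f).mp
  rw [Category.assoc, ← heq, reassoc_of% gmap_prodMap k sG sU sX mU hmU mX hmX f hf heq a b hab,
    fixToProd_comp_m k sG sX mX hmX, hab]

lemma w2 (sG : G ⟶ Spec k) (sU : U ⟶ Spec k) (sX : X ⟶ Spec k)
    (mU : pullback sG sU ⟶ U) (hmU : mU ≫ sU = pullback.snd sG sU ≫ sU)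
    (mX : pullback sG sX ⟶ X) (hmX : mX ≫ sX = pullback.snd sG sX ≫ sX)
    (f : U ⟶ X) (hf : f ≫ sX = sU)
    (heq : prodMap k sG sU sX f hf ≫ mX = mU ≫ f) [Mono f]
    {T : Scheme.{u}} (a : T ⟶ Fix k sG sX mX hmX) (b : T ⟶ U)
    (hab : b ≫ f = a ≫ fixToBase k sG sX mX hmX) :
    gmap k sG sU sX mU hmU mX hmX f hf heq a b hab ≫ actionPair k sG sU mU hmU
      = b ≫ pullback.diagonal sU := by
  apply pullback.hom_ext
  · simp only [actionPair, Category.assoc, pullback.lift_fst, pullback.diagonal_fst,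
      Category.comp_id]
    exact gmap_mU k sG sU sX mU hmU mX hmX f hf heq a b hab
  · simp only [actionPair, Category.assoc, pullback.lift_snd, pullback.diagonal_snd,
      Category.comp_id]
    exact pullback.lift_snd _ _ _

/-- The lift `T ⟶ Fix_G(U)`. -/
def liftFix (sG : G ⟶ Spec k) (sU : U ⟶ Spec k) (sX : X ⟶ Spec k)
    (mU : pullback sG sU ⟶ U) (hmU : mU ≫ sU = pullback.snd sG sU ≫ sU)
    (mX : pullback sG sX ⟶ X) (hmX : mX ≫ sX = pullback.snd sG sX ≫ sX)
    (f : U ⟶ X) (hf : f ≫ sX = sU)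
    (heq : prodMap k sG sU sX f hf ≫ mX = mU ≫ f) [Mono f]
    {T : Scheme.{u}} (a : T ⟶ Fix k sG sX mX hmX) (b : T ⟶ U)
    (hab : b ≫ f = a ≫ fixToBase k sG sX mX hmX) : T ⟶ Fix k sG sU mU hmU :=
  pullback.lift (gmap k sG sU sX mU hmU mX hmX f hf heq a b hab) b
    (w2 k sG sU sX mU hmU mX hmX f hf heq a b hab)

lemma liftFix_base (sG : G ⟶ Spec k) (sU : U ⟶ Spec k) (sX : X ⟶ Spec k)
    (mU : pullback sG sU ⟶ U) (hmU : mU ≫ sU = pullback.snd sG sU ≫ sU)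
    (mX : pullback sG sX ⟶ X) (hmX : mX ≫ sX = pullback.snd sG sX ≫ sX)
    (f : U ⟶ X) (hf : f ≫ sX = sU)
    (heq : prodMap k sG sU sX f hf ≫ mX = mU ≫ f) [Mono f]
    {T : Scheme.{u}} (a : T ⟶ Fix k sG sX mX hmX) (b : T ⟶ U)
    (hab : b ≫ f = a ≫ fixToBase k sG sX mX hmX) :
    liftFix k sG sU sX mU hmU mX hmX f hf heq a b hab ≫ fixToBase k sG sU mU hmU = b :=
  pullback.lift_snd _ _ _

lemma liftFix_fixMap (sG : G ⟶ Spec k) (sU : U ⟶ Spec k) (sX : X ⟶ Spec k)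
    (mU : pullback sG sU ⟶ U) (hmU : mU ≫ sU = pullback.snd sG sU ≫ sU)
    (mX : pullback sG sX ⟶ X) (hmX : mX ≫ sX = pullback.snd sG sX ≫ sX)
    (f : U ⟶ X) (hf : f ≫ sX = sU)
    (heq : prodMap k sG sU sX f hf ≫ mX = mU ≫ f) [Mono f]
    {T : Scheme.{u}} (a : T ⟶ Fix k sG sX mX hmX) (b : T ⟶ U)
    (hab : b ≫ f = a ≫ fixToBase k sG sX mX hmX) :
    liftFix k sG sU sX mU hmU mX hmX f hf heq a b hab
      ≫ fixMap k sG sU sX mU hmU mX hmX f hf heq = a := by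
  apply pullback.hom_ext
  · show _ ≫ _ ≫ fixToProd k sG sX mX hmX = a ≫ fixToProd k sG sX mX hmX
    rw [show fixMap k sG sU sX mU hmU mX hmX f hf heq ≫
        fixToProd k sG sX mX hmX
        = fixToProd k sG sU mU hmU ≫ prodMap k sG sU sX f hf from pullback.lift_fst _ _ _,
      ← Category.assoc, show liftFix k sG sU sX mU hmU mX hmX f hf heq a b hab
        ≫ fixToProd k sG sU mU hmU = gmap k sG sU sX mU hmU mX hmX f hf heq a b hab from
        pullback.lift_fst _ _ _, gmap_prodMap]
  · show _ ≫ _ ≫ fixToBase k sG sX mX hmX = a ≫ fixToBase k sG sX mX hmX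
    rw [show fixMap k sG sU sX mU hmU mX hmX f hf heq ≫
        fixToBase k sG sX mX hmX
        = fixToBase k sG sU mU hmU ≫ f from pullback.lift_snd _ _ _,
      ← Category.assoc, liftFix_base, hab]

lemma liftFix_uniq (sG : G ⟶ Spec k) (sU : U ⟶ Spec k) (sX : X ⟶ Spec k)
    (mU : pullback sG sU ⟶ U) (hmU : mU ≫ sU = pullback.snd sG sU ≫ sU)
    (mX : pullback sG sX ⟶ X) (hmX : mX ≫ sX = pullback.snd sG sX ≫ sX)
    (f : U ⟶ X) (hf : f ≫ sX = sU)
    (heq : prodMap k sG sU sX f hf ≫ mX = mU ≫ f) [Mono f]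
    {T : Scheme.{u}} (a : T ⟶ Fix k sG sX mX hmX) (b : T ⟶ U)
    (hab : b ≫ f = a ≫ fixToBase k sG sX mX hmX) (m' : T ⟶ Fix k sG sU mU hmU)
    (h1 : m' ≫ fixToBase k sG sU mU hmU = b)
    (h2 : m' ≫ fixMap k sG sU sX mU hmU mX hmX f hf heq = a) :
    m' = liftFix k sG sU sX mU hmU mX hmX f hf heq a b hab := by
  apply pullback.hom_ext
  · show m' ≫ fixToProd k sG sU mU hmU
      = liftFix k sG sU sX mU hmU mX hmX f hf heq a b hab ≫ fixToProd k sG sU mU hmU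
    rw [show liftFix k sG sU sX mU hmU mX hmX f hf heq a b hab
        ≫ fixToProd k sG sU mU hmU
        = gmap k sG sU sX mU hmU mX hmX f hf heq a b hab from pullback.lift_fst _ _ _]
    apply pullback.hom_ext
    · show m' ≫ fixToProd k sG sU mU hmU ≫ pullback.fst sG sU = _
      rw [show gmap k sG sU sX mU hmU mX hmX f hf heq a b hab ≫ pullback.fst sG sU
          = a ≫ fixToProd k sG sX mX hmX ≫ pullback.fst sG sX from pullback.lift_fst _ _ _,
        ← h2, Category.assoc, reassoc_of% show fixMap k sG sU sX mU hmU mX hmX f hf heq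
          ≫ fixToProd k sG sX mX hmX = fixToProd k sG sU mU hmU ≫ prodMap k sG sU sX f hf
          from pullback.lift_fst _ _ _]
      rw [show prodMap k sG sU sX f hf ≫ pullback.fst sG sX = pullback.fst sG sU ≫ 𝟙 G from
        pullback.lift_fst _ _ _, Category.comp_id]
    · show m' ≫ fixToProd k sG sU mU hmU ≫ pullback.snd sG sU = _
      rw [fixToProd_comp_snd, h1, gmap, pullback.lift_snd]
  · show m' ≫ fixToBase k sG sU mU hmU = _
    rw [h1]
    exact (liftFix_base k sG sU sX mU hmU mX hmX f hf heq a b hab).symm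

lemma fixMap_isPullback (sG : G ⟶ Spec k) (sU : U ⟶ Spec k) (sX : X ⟶ Spec k)
    (mU : pullback sG sU ⟶ U) (hmU : mU ≫ sU = pullback.snd sG sU ≫ sU)
    (mX : pullback sG sX ⟶ X) (hmX : mX ≫ sX = pullback.snd sG sX ≫ sX)
    (f : U ⟶ X) (hf : f ≫ sX = sU)
    (heq : prodMap k sG sU sX f hf ≫ mX = mU ≫ f) [Mono f] :
    IsPullback (fixToBase k sG sU mU hmU) (fixMap k sG sU sX mU hmU mX hmX f hf heq)
      f (fixToBase k sG sX mX hmX) := by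
  have hcomm : fixToBase k sG sU mU hmU ≫ f
      = fixMap k sG sU sX mU hmU mX hmX f hf heq ≫ fixToBase k sG sX mX hmX := by
    exact (pullback.lift_snd _ _ _).symm
  refine IsPullback.of_isLimit' ⟨hcomm⟩ ?_
  refine PullbackCone.IsLimit.mk _
    (fun s => liftFix k sG sU sX mU hmU mX hmX f hf heq s.snd s.fst s.condition)
    (fun s => liftFix_base k sG sU sX mU hmU mX hmX f hf heq s.snd s.fst s.condition)
    (fun s => liftFix_fixMap k sG sU sX mU hmU mX hmX f hf heq s.snd s.fst s.condition)
    (fun s m' h1 h2 =>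
      liftFix_uniq k sG sU sX mU hmU mX hmX f hf heq s.snd s.fst s.condition m' h1 h2)

/-- If `f : U ⟶ X` is a `G`-equivariant open immersion of `k`-schemes, then
the induced morphism `Fix_G(f) : Fix_G(U) ⟶ Fix_G(X)` is an open immersion. -/
theorem statement1 (sG : G ⟶ Spec k) (sU : U ⟶ Spec k) (sX : X ⟶ Spec k)
    (mU : pullback sG sU ⟶ U) (hmU : mU ≫ sU = pullback.snd sG sU ≫ sU)
    (mX : pullback sG sX ⟶ X) (hmX : mX ≫ sX = pullback.snd sG sX ≫ sX)
    (f : U ⟶ X) (hf : f ≫ sX = sU)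
    (heq : prodMap k sG sU sX f hf ≫ mX = mU ≫ f)
    [IsOpenImmersion f] :
    IsOpenImmersion (fixMap k sG sU sX mU hmU mX hmX f hf heq) := by
  have sq := fixMap_isPullback k sG sU sX mU hmU mX hmX f hf heq
  exact MorphismProperty.of_isPullback (P := @IsOpenImmersion) sq ‹IsOpenImmersion f›

end Paper
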